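/- The subsequence (ỹ_{2k+1})_{k∈ℕ} is strictly decreasing. -/

import Mathlib

noncomputable def c : ℝ := 4 / (9 - Real.sqrt 5)
noncomputable def φ : ℝ := (1 + Real.sqrt 5) / 2

theorem stmt5 (y : ℕ → ℝ) (h1 : y 1 = c) (h2 : y 2 = c / 2)
    (hrec : ∀ n : ℕ, 1 ≤ n →
      2 * y (n + 1) = 2 * y n + c * (-1 : ℝ) ^ n * φ ^ ((1 : ℤ) - (n : ℤ))) :
    StrictAnti (fun k : ℕ => y (2 * k + 1)) := by
  have hs : Real.sqrt 5 ^ 2 = 5 := Real.sq_sqrt (by norm_num)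
  have hs2 : 2 < Real.sqrt 5 := by nlinarith [Real.sqrt_nonneg 5]
  have hs3 : Real.sqrt 5 < 3 := by nlinarith [Real.sqrt_nonneg 5]
  have hc : 0 < c := by
    unfold c; apply div_pos <;> linarith
  have hφ : 1 < φ := by unfold φ; linarith
  apply strictAnti_nat_of_succ_lt
  intro k
  have ha := hrec (2 * k + 1) (by omega)
  have hb := hrec (2 * k + 2) (by omega)
  have e1 : ((-1 : ℝ)) ^ (2 * k + 1) = -1 := Odd.neg_one_pow ⟨k, by ring⟩
  have e2 : ((-1 : ℝ)) ^ (2 * k + 2) = 1 := Even.neg_one_pow ⟨k + 1, by ring⟩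
  rw [e1] at ha
  rw [e2] at hb
  have ea : (1 : ℤ) - ((2 * k + 1 : ℕ) : ℤ) = -(2 * k) := by push_cast; ring
  have eb : (1 : ℤ) - ((2 * k + 2 : ℕ) : ℤ) = -(2 * k + 1) := by push_cast; ring
  rw [ea] at ha
  rw [eb] at hb
  have hpow : φ ^ (-(2 * (k : ℤ) + 1)) < φ ^ (-(2 * (k : ℤ))) :=
    zpow_lt_zpow_right₀ hφ (by omega)
  have h23 : 2 * k + 1 + 1 = 2 * k + 2 := by ring
  have h24 : 2 * k + 2 + 1 = 2 * (k + 1) + 1 := by ring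
  rw [h23] at ha
  rw [h24] at hb
  nlinarith [mul_lt_mul_of_pos_left hpow hc]
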